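/- Let p₁, ..., pₘ be independent random variables where for indices j in a null set H ⊆ [m], pⱼ takes values in {1/2, 1} with P(pⱼ = 1/2) ≤ 1/2, and the pⱼ for j ∉ H are arbitrary (independent of the nulls). Define V⁺(k) = #{j ≤ k : pⱼ ≤ 1/2, j ∈ H} and V⁻(k) = #{j ≤ k : pⱼ > 1/2, j ∈ H}, and M(k) = V⁺(k)/(1 + V⁻(k)). Then M(k) is a supermartingale running backward in time with respect to the filtration F_k generated by all non-null p-values and the values V±(k') for k' ≥ k; consequently for any stopping time k̂ with respect to this backward filtration, E[M(k̂)] ≤ E[M(m)]. -/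

import Mathlib

open MeasureTheory Finset
open scoped Classical

variable {Ω : Type*}

/-- `V⁺(k)` : number of null indices `j ≤ k` with `pⱼ ≤ 1/2`. -/
noncomputable def Vplus {m : ℕ} (H : Finset (Fin m)) (p : Fin m → Ω → ℝ)
    (k : ℕ) (ω : Ω) : ℕ :=
  (H.filter (fun j => j.val < k ∧ p j ω ≤ 1/2)).card

/-- `V⁻(k)` : number of null indices `j ≤ k` with `pⱼ > 1/2`. -/
noncomputable def Vminus {m : ℕ} (H : Finset (Fin m)) (p : Fin m → Ω → ℝ)
    (k : ℕ) (ω : Ω) : ℕ :=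
  (H.filter (fun j => j.val < k ∧ 1/2 < p j ω)).card

/-- `M(k) = V⁺(k) / (1 + V⁻(k))`. -/
noncomputable def Mart {m : ℕ} (H : Finset (Fin m)) (p : Fin m → Ω → ℝ)
    (k : ℕ) (ω : Ω) : ℝ :=
  (Vplus H p k ω : ℝ) / (1 + (Vminus H p k ω : ℝ))

/-- The backward filtration `F_k`, generated by all non-null p-values together with
`V±(k')` for all `k' ≥ k`. -/
noncomputable def Filt [MeasurableSpace Ω] {m : ℕ} (H : Finset (Fin m))
    (p : Fin m → Ω → ℝ) (k : ℕ) : MeasurableSpace Ω :=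
  MeasurableSpace.comap
    (fun ω => ((fun j : {j : Fin m // j ∉ H} => p j.val ω),
               (fun k' : {k' : ℕ // k ≤ k'} =>
                  (Vplus H p k'.val ω, Vminus H p k'.val ω))))
    inferInstance

namespace KnockoffAux

variable {m : ℕ}

noncomputable def vpx (H : Finset (Fin m)) (k : ℕ) (x : Fin m → ℝ) : ℕ :=
  (H.filter (fun j => j.val < k ∧ x j ≤ 1/2)).card

noncomputable def vmx (H : Finset (Fin m)) (k : ℕ) (x : Fin m → ℝ) : ℕ :=
  (H.filter (fun j => j.val < k ∧ 1/2 < x j)).card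

noncomputable def mx (H : Finset (Fin m)) (k : ℕ) (x : Fin m → ℝ) : ℝ :=
  (vpx H k x : ℝ) / (1 + (vmx H k x : ℝ))

lemma measurable_vpx (H : Finset (Fin m)) (k : ℕ) : Measurable (vpx H k) := by
  have h : vpx H k = fun x => ∑ j ∈ H, if j.val < k ∧ x j ≤ 1/2 then 1 else 0 := by
    funext x; exact Finset.card_filter _ _
  rw [h]
  refine Finset.measurable_sum _ fun j _ => Measurable.ite ?_ measurable_const measurable_const
  by_cases hj : j.val < k
  · simp only [hj, true_and]
    exact measurableSet_le (measurable_pi_apply j) measurable_const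
  · simp [hj]

lemma measurable_vmx (H : Finset (Fin m)) (k : ℕ) : Measurable (vmx H k) := by
  have h : vmx H k = fun x => ∑ j ∈ H, if j.val < k ∧ 1/2 < x j then 1 else 0 := by
    funext x; exact Finset.card_filter _ _
  rw [h]
  refine Finset.measurable_sum _ fun j _ => Measurable.ite ?_ measurable_const measurable_const
  by_cases hj : j.val < k
  · simp only [hj, true_and]
    exact measurableSet_lt measurable_const (measurable_pi_apply j)
  · simp [hj]

lemma measurable_mx (H : Finset (Fin m)) (k : ℕ) : Measurable (mx H k) :=
  (measurable_from_top.comp (measurable_vpx H k)).div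
    (measurable_const.add (measurable_from_top.comp (measurable_vmx H k)))

lemma vpx_le (H : Finset (Fin m)) (k : ℕ) (x : Fin m → ℝ) : vpx H k x ≤ m :=
  (Finset.card_filter_le H _).trans (by simpa using Finset.card_le_univ H)

lemma vmx_le (H : Finset (Fin m)) (k : ℕ) (x : Fin m → ℝ) : vmx H k x ≤ m :=
  (Finset.card_filter_le H _).trans (by simpa using Finset.card_le_univ H)

lemma mx_nonneg (H : Finset (Fin m)) (k : ℕ) (x : Fin m → ℝ) : 0 ≤ mx H k x :=
  div_nonneg (by positivity) (by positivity)

lemma mx_le (H : Finset (Fin m)) (k : ℕ) (x : Fin m → ℝ) : mx H k x ≤ (m : ℝ) := by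
  have h1 : mx H k x ≤ (vpx H k x : ℝ) :=
    div_le_self (by positivity) (le_add_of_nonneg_right (by positivity))
  exact h1.trans (by exact_mod_cast vpx_le H k x)

lemma integrable_of_bound {E : Type*} [MeasurableSpace E] (ν : Measure E) [IsFiniteMeasure ν]
    (f : E → ℝ) (hf : Measurable f) (C : ℝ) (h : ∀ x, |f x| ≤ C) : Integrable f ν :=
  (integrable_const C).mono' hf.aestronglyMeasurable (Filter.Eventually.of_forall h)

lemma filter_card_succ (H : Finset (Fin m)) (k : ℕ) (hk : 1 ≤ k) (j₀ : Fin m)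
    (hj₀ : j₀ ∈ H) (hj₀v : (j₀ : ℕ) = k - 1) (C : ℝ → Prop) (x : Fin m → ℝ) :
    (H.filter fun j => j.val < k ∧ C (x j)).card
      = (H.filter fun j => j.val < k - 1 ∧ C (x j)).card + (if C (x j₀) then 1 else 0) := by
  have hsplit : H.filter (fun j => j.val < k ∧ C (x j))
      = (H.filter fun j => j.val < k - 1 ∧ C (x j)) ∪ (H.filter fun j => j = j₀ ∧ C (x j)) := by
    ext j
    simp only [mem_filter, mem_union]
    constructor
    · rintro ⟨hjH, hjk, hC⟩
      by_cases h : j = j₀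
      · exact Or.inr ⟨hjH, h, hC⟩
      · refine Or.inl ⟨hjH, ?_, hC⟩
        have : (j : ℕ) ≠ k - 1 := fun hh => h (Fin.ext (hh.trans hj₀v.symm))
        omega
    · rintro (⟨h1, h2, h3⟩ | ⟨h1, h2, h3⟩)
      · exact ⟨h1, by omega, h3⟩
      · subst h2; exact ⟨h1, by omega, h3⟩
  have hdis : Disjoint (H.filter fun j => j.val < k - 1 ∧ C (x j))
      (H.filter fun j => j = j₀ ∧ C (x j)) := by
    rw [Finset.disjoint_left]
    rintro j hj1 hj2
    simp only [mem_filter] at hj1 hj2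
    obtain ⟨-, hlt, -⟩ := hj1
    obtain ⟨-, rfl, -⟩ := hj2
    omega
  have hsingle : (H.filter fun j => j = j₀ ∧ C (x j)) = if C (x j₀) then {j₀} else ∅ := by
    by_cases h : C (x j₀)
    · rw [if_pos h]; ext j; simp only [mem_filter, mem_singleton]
      constructor
      · rintro ⟨-, rfl, -⟩; rfl
      · rintro rfl; exact ⟨hj₀, rfl, h⟩
    · rw [if_neg h]; ext j; simp only [mem_filter, notMem_empty, iff_false]
      rintro ⟨-, rfl, hC⟩; exact h hC
  rw [hsplit, Finset.card_union_of_disjoint hdis, hsingle]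
  congr 1
  by_cases h : C (x j₀) <;> simp [h]

lemma filter_card_swap (H : Finset (Fin m)) (k' : ℕ) (j j₀ : Fin m)
    (hj : j ∈ H) (hj₀ : j₀ ∈ H) (hjv : j.val < k') (hj₀v : j₀.val < k')
    (C : ℝ → Prop) (x : Fin m → ℝ) :
    (H.filter fun a => a.val < k' ∧ C (x (Equiv.swap j j₀ a))).card
      = (H.filter fun a => a.val < k' ∧ C (x a)).card := by
  set e := Equiv.swap j j₀ with he
  have hmem : ∀ a, a ∈ H → e a ∈ H := by
    intro a ha
    rcases eq_or_ne a j with rfl | h1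
    · simpa [he, Equiv.swap_apply_left] using hj₀
    rcases eq_or_ne a j₀ with rfl | h2
    · simpa [he, Equiv.swap_apply_right] using hj
    · rwa [he, Equiv.swap_apply_of_ne_of_ne h1 h2]
  have hval : ∀ a : Fin m, a.val < k' → (e a).val < k' := by
    intro a ha
    rcases eq_or_ne a j with rfl | h1
    · simpa [he, Equiv.swap_apply_left] using hj₀v
    rcases eq_or_ne a j₀ with rfl | h2
    · simpa [he, Equiv.swap_apply_right] using hjv
    · rwa [he, Equiv.swap_apply_of_ne_of_ne h1 h2]
  have hee : ∀ a : Fin m, e (e a) = a := fun a => Equiv.swap_apply_self _ _ _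
  refine Finset.card_bij' (fun a _ => e a) (fun a _ => e a) ?_ ?_ ?_ ?_
  · intro a ha
    simp only [mem_filter] at ha ⊢
    exact ⟨hmem a ha.1, hval a ha.2.1, ha.2.2⟩
  · intro a ha
    simp only [mem_filter] at ha ⊢
    exact ⟨hmem a ha.1, hval a ha.2.1, by rw [hee]; exact ha.2.2⟩
  · intro a _; exact hee a
  · intro a _; exact hee a

lemma mx_diff (H : Finset (Fin m)) (k : ℕ) (hk : 1 ≤ k) (j₀ : Fin m)
    (hj₀ : j₀ ∈ H) (hj₀v : (j₀ : ℕ) = k - 1) (x : Fin m → ℝ) :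
    mx H k x - mx H (k-1) x =
      if x j₀ ≤ 1/2 then 1/(1 + (vmx H k x : ℝ))
      else -((vpx H k x : ℝ)/((vmx H k x : ℝ) * (1 + (vmx H k x : ℝ)))) := by
  have hvp := filter_card_succ H k hk j₀ hj₀ hj₀v (fun r => r ≤ 1/2) x
  have hvm := filter_card_succ H k hk j₀ hj₀ hj₀v (fun r => 1/2 < r) x
  by_cases hA : x j₀ ≤ 1/2
  · have h1 : vpx H k x = vpx H (k-1) x + 1 := by
      have h := hvp; rw [if_pos hA] at h; exact h
    have h2 : vmx H k x = vmx H (k-1) x := by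
      have h := hvm; rw [if_neg (not_lt.mpr hA)] at h; exact h.trans (Nat.add_zero _)
    rw [if_pos hA]
    unfold mx
    rw [h1, h2]
    have hd : (0:ℝ) < 1 + (vmx H (k-1) x : ℝ) := by positivity
    push_cast
    rw [div_sub_div_same]
    ring_nf
  · have h1 : vpx H k x = vpx H (k-1) x := by
      have h := hvp; rw [if_neg hA] at h; exact h.trans (Nat.add_zero _)
    have h2 : vmx H k x = vmx H (k-1) x + 1 := by
      have h := hvm; rw [if_pos (not_le.mp hA)] at h; exact h
    rw [if_neg hA]
    unfold mx
    rw [h1, h2]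
    have hd1 : (0:ℝ) < 1 + (vmx H (k-1) x : ℝ) := by positivity
    have hd2 : (0:ℝ) < 1 + ((vmx H (k-1) x : ℝ) + 1) := by positivity
    push_cast
    field_simp
    ring

lemma pi_swap (M : Fin m → Measure ℝ) [∀ i, IsProbabilityMeasure (M i)]
    (e : Equiv.Perm (Fin m)) (hM : ∀ i, M (e i) = M i) :
    (Measure.pi M).map (fun x i => x (e i)) = Measure.pi M := by
  have hg : Measurable fun (x : Fin m → ℝ) i => x (e i) :=
    measurable_pi_lambda _ fun i => measurable_pi_apply _
  refine (Measure.pi_eq fun s hs => ?_).symm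
  rw [Measure.map_apply hg (MeasurableSet.univ_pi hs)]
  have hpre : (fun (x : Fin m → ℝ) i => x (e i)) ⁻¹' (Set.univ.pi s)
      = Set.univ.pi fun i => s (e.symm i) := by
    ext x
    simp only [Set.mem_preimage, Set.mem_univ_pi]
    constructor
    · intro h i; simpa using h (e.symm i)
    · intro h i; simpa using h (e i)
  rw [hpre, Measure.pi_pi]
  calc ∏ i, M i (s (e.symm i))
      = ∏ i, (fun a => M (e a) (s a)) (e.symm i) := by
        refine Finset.prod_congr rfl fun i _ => ?_
        simp only []
        rw [Equiv.apply_symm_apply]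
    _ = ∏ a, M (e a) (s a) := Equiv.prod_comp e.symm (fun a => M (e a) (s a))
    _ = ∏ a, M a (s a) := by
        refine Finset.prod_congr rfl fun a _ => by rw [hM a]

end KnockoffAux

namespace KnockoffAux

open ProbabilityTheory

lemma vpx_as_sum {m : ℕ} (H : Finset (Fin m)) (k : ℕ) (x : Fin m → ℝ) :
    (vpx H k x : ℝ) = ∑ j ∈ H.filter (fun j => j.val < k), (if x j ≤ 1/2 then (1:ℝ) else 0) := by
  have h : vpx H k x = ∑ j ∈ H.filter (fun j => j.val < k), (if x j ≤ 1/2 then (1:ℕ) else 0) := by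
    unfold vpx
    rw [← Finset.filter_filter, Finset.card_filter]
  rw [h]
  push_cast
  refine Finset.sum_congr rfl fun j _ => ?_
  split_ifs <;> simp

lemma vmx_as_sum {m : ℕ} (H : Finset (Fin m)) (k : ℕ) (x : Fin m → ℝ) :
    (vmx H k x : ℝ) = ∑ j ∈ H.filter (fun j => j.val < k), (if 1/2 < x j then (1:ℝ) else 0) := by
  have h : vmx H k x = ∑ j ∈ H.filter (fun j => j.val < k), (if 1/2 < x j then (1:ℕ) else 0) := by
    unfold vmx
    rw [← Finset.filter_filter, Finset.card_filter]
  rw [h]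
  push_cast
  refine Finset.sum_congr rfl fun j _ => ?_
  split_ifs <;> simp

lemma core [MeasurableSpace Ω] (μ : Measure Ω) [IsProbabilityMeasure μ]
    (m : ℕ) (H : Finset (Fin m)) (p : Fin m → Ω → ℝ)
    (hmeas : ∀ j, Measurable (p j))
    (hvals : ∀ j ∈ H, ∀ᵐ ω ∂μ, p j ω = 1/2 ∨ p j ω = 1)
    (hiid : ∀ j ∈ H, ∀ j' ∈ H, μ {ω | p j ω = 1/2} = μ {ω | p j' ω = 1/2})
    (hindep : ProbabilityTheory.iIndepFun p μ)
    (k : ℕ) (hk1 : 1 ≤ k) (hkm : k ≤ m) (s : Set Ω)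
    (hs : MeasurableSet[Filt H p k] s) :
    ∫ ω in s, Mart H p (k-1) ω ∂μ ≤ ∫ ω in s, Mart H p k ω ∂μ := by
  obtain ⟨t, ht, rfl⟩ := hs
  have hj₀lt : k - 1 < m := by omega
  set j₀ : Fin m := ⟨k-1, hj₀lt⟩ with hj₀def
  by_cases hj₀H : j₀ ∈ H
  swap
  · have heq : Mart H p (k-1) = Mart H p k := by
      funext ω
      have hiffgen : ∀ (C : Fin m → Prop), H.filter (fun j => j.val < k - 1 ∧ C j)
          = H.filter (fun j => j.val < k ∧ C j) := by
        intro C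
        refine Finset.filter_congr fun j hj => ?_
        have hne : (j : ℕ) ≠ k - 1 := by
          intro hh
          exact hj₀H ((Fin.ext hh : j = j₀) ▸ hj)
        constructor
        · rintro ⟨h1, h2⟩; exact ⟨by omega, h2⟩
        · rintro ⟨h1, h2⟩; exact ⟨by omega, h2⟩
      unfold Mart Vplus Vminus
      rw [hiffgen (fun j => p j ω ≤ 1/2), hiffgen (fun j => 1/2 < p j ω)]
    rw [heq]
  -- main case : j₀ ∈ H
  set X : Ω → (Fin m → ℝ) := fun ω j => p j ω with hXdef
  have hX : Measurable X := measurable_pi_lambda _ hmeas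
  set ν : Measure (Fin m → ℝ) := μ.map X with hνdef
  haveI : IsProbabilityMeasure ν := Measure.isProbabilityMeasure_map hX.aemeasurable
  haveI : ∀ j : Fin m, IsProbabilityMeasure (μ.map (p j)) :=
    fun j => Measure.isProbabilityMeasure_map (hmeas j).aemeasurable
  have hnu : ν = Measure.pi (fun j => μ.map (p j)) := by
    refine (Measure.pi_eq fun s' hs' => ?_).symm
    rw [hνdef, Measure.map_apply hX (MeasurableSet.univ_pi hs')]
    have hXpre : X ⁻¹' Set.univ.pi s' = ⋂ j ∈ Finset.univ, p j ⁻¹' s' j := by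
      ext ω; simp [hXdef, Set.mem_pi]
    rw [hXpre, hindep.measure_inter_preimage_eq_mul Finset.univ (fun j _ => hs' j)]
    exact Finset.prod_congr rfl fun j _ => (Measure.map_apply (hmeas j) (hs' j)).symm
  have key : ∀ j ∈ H, ∀ (A : Set ℝ), MeasurableSet A →
      μ (p j ⁻¹' A) = (if (1:ℝ)/2 ∈ A then μ {ω | p j ω = 1/2} else 0)
        + (if (1:ℝ) ∈ A then μ {ω | p j ω = 1} else 0) := by
    intro j hj A hA
    have hUc : μ ({ω | p j ω = 1/2} ∪ {ω | p j ω = 1})ᶜ = 0 := by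
      have h := ae_iff.mp (hvals j hj)
      convert h using 2
      ext ω; simp only [Set.mem_compl_iff, Set.mem_union, Set.mem_setOf_eq]
    have h1 : μ (p j ⁻¹' A) = μ ((p j ⁻¹' A) ∩ ({ω | p j ω = 1/2} ∪ {ω | p j ω = 1})) :=
      (measure_inter_conull hUc).symm
    rw [h1, Set.inter_union_distrib_left]
    have hd : Disjoint ((p j ⁻¹' A) ∩ {ω | p j ω = 1/2}) ((p j ⁻¹' A) ∩ {ω | p j ω = 1}) := by
      rw [Set.disjoint_left]
      rintro ω ⟨-, h2⟩ ⟨-, h3⟩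
      rw [Set.mem_setOf_eq] at h2 h3
      rw [h2] at h3; norm_num at h3
    rw [measure_union hd (((hmeas j) hA).inter ((hmeas j) (measurableSet_singleton 1)))]
    congr 1
    · by_cases hh : (1:ℝ)/2 ∈ A
      · rw [if_pos hh]
        congr 1
        ext ω
        simp only [Set.mem_inter_iff, Set.mem_preimage, Set.mem_setOf_eq]
        exact ⟨fun h => h.2, fun h => ⟨by rw [h]; exact hh, h⟩⟩
      · rw [if_neg hh]
        have hempty : (p j ⁻¹' A) ∩ {ω | p j ω = 1/2} = ∅ := by
          ext ω
          simp only [Set.mem_inter_iff, Set.mem_preimage, Set.mem_setOf_eq,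
            Set.mem_empty_iff_false, iff_false, not_and]
          intro h1' h2'; exact hh (h2' ▸ h1')
        rw [hempty, measure_empty]
    · by_cases hh : (1:ℝ) ∈ A
      · rw [if_pos hh]
        congr 1
        ext ω
        simp only [Set.mem_inter_iff, Set.mem_preimage, Set.mem_setOf_eq]
        exact ⟨fun h => h.2, fun h => ⟨by rw [h]; exact hh, h⟩⟩
      · rw [if_neg hh]
        have hempty : (p j ⁻¹' A) ∩ {ω | p j ω = 1} = ∅ := by
          ext ω
          simp only [Set.mem_inter_iff, Set.mem_preimage, Set.mem_setOf_eq,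
            Set.mem_empty_iff_false, iff_false, not_and]
          intro h1' h2'; exact hh (h2' ▸ h1')
        rw [hempty, measure_empty]
  have hsum : ∀ j ∈ H, μ {ω | p j ω = 1/2} + μ {ω | p j ω = 1} = 1 := by
    intro j hj
    have h := key j hj Set.univ MeasurableSet.univ
    simpa using h.symm
  have hone : ∀ j ∈ H, ∀ j' ∈ H, μ {ω | p j ω = 1} = μ {ω | p j' ω = 1} := by
    intro j hj j' hj'
    have h1 := hsum j hj
    have h2 := hsum j' hj'
    rw [hiid j hj j' hj', ← h2] at h1
    exact (ENNReal.add_right_inj (measure_ne_top μ _)).mp h1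
  have hmargs : ∀ j ∈ H, ∀ j' ∈ H, μ.map (p j) = μ.map (p j') := by
    intro j hj j' hj'
    ext A hA
    rw [Measure.map_apply (hmeas j) hA, Measure.map_apply (hmeas j') hA,
      key j hj A hA, key j' hj' A hA, hiid j hj j' hj', hone j hj j' hj']
  have hswapmeas : ∀ (e : Equiv.Perm (Fin m)), Measurable fun (x : Fin m → ℝ) i => x (e i) :=
    fun e => measurable_pi_lambda _ fun i => measurable_pi_apply _
  have hswapnu : ∀ j ∈ H, ∀ j' ∈ H, ν.map (fun x i => x (Equiv.swap j j' i)) = ν := by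
    intro j hj j' hj'
    rw [hnu]
    apply pi_swap
    intro i
    rcases eq_or_ne i j with rfl | h1
    · rw [Equiv.swap_apply_left]; exact hmargs j' hj' i hj
    rcases eq_or_ne i j' with rfl | h2
    · rw [Equiv.swap_apply_right]; exact hmargs j hj i hj'
    · rw [Equiv.swap_apply_of_ne_of_ne h1 h2]
  have hint_swap : ∀ j ∈ H, ∀ j' ∈ H, ∀ f : (Fin m → ℝ) → ℝ, Measurable f →
      ∫ x, f (fun i => x (Equiv.swap j j' i)) ∂ν = ∫ x, f x ∂ν := by
    intro j hj j' hj' f hf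
    conv_rhs => rw [← hswapnu j hj j' hj']
    rw [integral_map (hswapmeas _).aemeasurable hf.aestronglyMeasurable]
  set Ψ : (Fin m → ℝ) → ({j : Fin m // j ∉ H} → ℝ) × ({k' : ℕ // k ≤ k'} → ℕ × ℕ) :=
    fun x => ((fun j => x j.val), (fun k' => (vpx H k'.val x, vmx H k'.val x))) with hΨdef
  have hΨ : Measurable Ψ := by
    refine Measurable.prod ?_ ?_
    · exact measurable_pi_lambda _ fun j => measurable_pi_apply _
    · refine measurable_pi_lambda _ fun k' => Measurable.prod ?_ ?_
      · exact measurable_vpx H k'.val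
      · exact measurable_vmx H k'.val
  set u : Set (Fin m → ℝ) := Ψ ⁻¹' t with hudef
  have hu : MeasurableSet u := hΨ ht
  show ∫ ω in X ⁻¹' u, Mart H p (k-1) ω ∂μ ≤ ∫ ω in X ⁻¹' u, Mart H p k ω ∂μ
  have hred : ∀ k', ∫ ω in X ⁻¹' u, Mart H p k' ω ∂μ = ∫ x in u, mx H k' x ∂ν := by
    intro k'
    have h := setIntegral_map (μ := μ) (g := X) (f := mx H k') hu
      (measurable_mx H k').aestronglyMeasurable hX.aemeasurable
    exact h.symm
  rw [hred (k-1), hred k]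
  -- now entirely on the canonical space
  have hm1 : (1:ℝ) ≤ (m:ℝ) := by exact_mod_cast hk1.trans hkm
  set G : Finset (Fin m) := H.filter (fun j => j.val < k) with hGdef
  set b : (Fin m → ℝ) → ℝ := fun x => (vmx H k x : ℝ) with hbdef
  set a : (Fin m → ℝ) → ℝ := fun x => (vpx H k x : ℝ) with hadef
  set d : (Fin m → ℝ) → ℝ := fun x => b x * (1 + b x) with hddef
  have hb : Measurable b := measurable_from_top.comp (measurable_vmx H k)
  have ha : Measurable a := measurable_from_top.comp (measurable_vpx H k)
  have hd : Measurable d := hb.mul (measurable_const.add hb)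
  have hb0 : ∀ x, 0 ≤ b x := fun x => Nat.cast_nonneg _
  have ha0 : ∀ x, 0 ≤ a x := fun x => Nat.cast_nonneg _
  have hb_le : ∀ x, b x ≤ (m:ℝ) := fun x => by
    simp only [hbdef]; exact_mod_cast vmx_le H k x
  have ha_le : ∀ x, a x ≤ (m:ℝ) := fun x => by
    simp only [hadef]; exact_mod_cast vpx_le H k x
  have hd01 : ∀ x, d x = 0 ∨ 1 ≤ d x := by
    intro x
    rcases Nat.eq_zero_or_pos (vmx H k x) with h | h
    · left; simp only [hddef, hbdef, h]; norm_num
    · right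
      have h1 : (1:ℝ) ≤ b x := by simp only [hbdef]; exact_mod_cast h
      simp only [hddef]; nlinarith
  have hdivb : ∀ (c dd : ℝ), 0 ≤ c → c ≤ (m:ℝ) → (dd = 0 ∨ 1 ≤ dd) →
      0 ≤ c / dd ∧ c / dd ≤ (m:ℝ) + 1 := by
    intro c dd hc hcm hdd
    rcases hdd with h | h
    · rw [h, div_zero]
      constructor
      · exact le_refl 0
      · linarith
    · have h0 : (0:ℝ) < dd := lt_of_lt_of_le one_pos h
      refine ⟨by positivity, ?_⟩
      calc c / dd ≤ c := div_le_self hc h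
        _ ≤ (m:ℝ) + 1 := by linarith
  have hboundite : ∀ (P : Prop) (inst : Decidable P) (c dd : ℝ),
      0 ≤ c → c ≤ (m:ℝ) → (dd = 0 ∨ 1 ≤ dd) →
      0 ≤ (@ite _ P inst (c / dd) 0) ∧ (@ite _ P inst (c / dd) 0) ≤ (m:ℝ) + 1 := by
    intro P inst c dd h0 h1 h2
    split_ifs with h
    · exact hdivb c dd h0 h1 h2
    · exact ⟨le_refl 0, by linarith⟩
  have habs : ∀ (f : (Fin m → ℝ) → ℝ), (∀ x, 0 ≤ f x ∧ f x ≤ (m:ℝ)+1) →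
      ∀ x, |f x| ≤ (m:ℝ)+1 := fun f h x => by
    rw [abs_of_nonneg (h x).1]; exact (h x).2
  set F1 : (Fin m → ℝ) → ℝ :=
    fun x => if x ∈ u ∧ x j₀ ≤ 1/2 then 1/(1 + b x) else 0 with hF1
  set F2 : (Fin m → ℝ) → ℝ :=
    fun x => if x ∈ u ∧ 1/2 < x j₀ then a x / d x else 0 with hF2
  set Sf : (Fin m → ℝ) → ℝ :=
    fun x => if x ∈ u ∧ x j₀ ≤ 1/2 then b x / d x else 0 with hSf
  set hfun : Fin m → (Fin m → ℝ) → ℝ :=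
    fun j x => if x ∈ u ∧ (1/2 < x j₀ ∧ x j ≤ 1/2) then 1 / d x else 0 with hhfun
  set hfun' : Fin m → (Fin m → ℝ) → ℝ :=
    fun j x => if x ∈ u ∧ (1/2 < x j ∧ x j₀ ≤ 1/2) then 1 / d x else 0 with hhfun'
  have hmsle : ∀ (i : Fin m), MeasurableSet {x : Fin m → ℝ | x i ≤ 1/2} :=
    fun i => measurableSet_le (measurable_pi_apply i) measurable_const
  have hmslt : ∀ (i : Fin m), MeasurableSet {x : Fin m → ℝ | 1/2 < x i} :=
    fun i => measurableSet_lt measurable_const (measurable_pi_apply i)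
  have hmF1 : Measurable F1 := by
    rw [hF1]
    exact Measurable.ite (hu.inter (hmsle j₀))
      (measurable_const.div (measurable_const.add hb)) measurable_const
  have hmF2 : Measurable F2 := by
    rw [hF2]
    exact Measurable.ite (hu.inter (hmslt j₀)) (ha.div hd) measurable_const
  have hmSf : Measurable Sf := by
    rw [hSf]
    exact Measurable.ite (hu.inter (hmsle j₀)) (hb.div hd) measurable_const
  have hmh : ∀ j, Measurable (hfun j) := by
    intro j
    rw [hhfun]
    exact Measurable.ite (hu.inter ((hmslt j₀).inter (hmsle j))) (measurable_const.div hd)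
      measurable_const
  have hmh' : ∀ j, Measurable (hfun' j) := by
    intro j
    rw [hhfun']
    exact Measurable.ite (hu.inter ((hmslt j).inter (hmsle j₀))) (measurable_const.div hd)
      measurable_const
  have hone_le : ∀ x : Fin m → ℝ, (1:ℝ) ≤ 1 + b x := fun x => le_add_of_nonneg_right (hb0 x)
  have hbd1 : ∀ x, 0 ≤ F1 x ∧ F1 x ≤ (m:ℝ)+1 := by
    simp only [hF1]
    intro x
    exact hboundite _ _ 1 (1 + b x) one_pos.le hm1 (Or.inr (hone_le x))
  have hbd2 : ∀ x, 0 ≤ F2 x ∧ F2 x ≤ (m:ℝ)+1 := by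
    simp only [hF2]; intro x
    exact hboundite _ _ (a x) (d x) (ha0 x) (ha_le x) (hd01 x)
  have hbdS : ∀ x, 0 ≤ Sf x ∧ Sf x ≤ (m:ℝ)+1 := by
    simp only [hSf]; intro x
    exact hboundite _ _ (b x) (d x) (hb0 x) (hb_le x) (hd01 x)
  have hbdh : ∀ j x, 0 ≤ hfun j x ∧ hfun j x ≤ (m:ℝ)+1 := by
    intro j
    simp only [hhfun]; intro x
    exact hboundite _ _ 1 (d x) one_pos.le hm1 (hd01 x)
  have hbdh' : ∀ j x, 0 ≤ hfun' j x ∧ hfun' j x ≤ (m:ℝ)+1 := by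
    intro j
    simp only [hhfun']; intro x
    exact hboundite _ _ 1 (d x) one_pos.le hm1 (hd01 x)
  have hintF1 : Integrable F1 ν := integrable_of_bound ν F1 hmF1 _ (habs _ hbd1)
  have hintF2 : Integrable F2 ν := integrable_of_bound ν F2 hmF2 _ (habs _ hbd2)
  have hintSf : Integrable Sf ν := integrable_of_bound ν Sf hmSf _ (habs _ hbdS)
  have hinth : ∀ j, Integrable (hfun j) ν := fun j =>
    integrable_of_bound ν _ (hmh j) _ (habs _ (hbdh j))
  have hinth' : ∀ j, Integrable (hfun' j) ν := fun j =>
    integrable_of_bound ν _ (hmh' j) _ (habs _ (hbdh' j))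
  have hintm : ∀ k', Integrable (u.indicator (mx H k')) ν := fun k' => by
    refine integrable_of_bound ν _ ((measurable_mx H k').indicator hu) ((m:ℝ)+1) fun x => ?_
    by_cases hx : x ∈ u
    · rw [Set.indicator_of_mem hx, abs_of_nonneg (mx_nonneg H k' x)]
      have := mx_le H k' x; linarith
    · rw [Set.indicator_of_notMem hx, abs_zero]; linarith
  -- pointwise difference identity
  have hpt : ∀ x, u.indicator (mx H k) x - u.indicator (mx H (k-1)) x = F1 x - F2 x := by
    intro x
    by_cases hx : x ∈ u
    · rw [Set.indicator_of_mem hx, Set.indicator_of_mem hx]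
      have hdiff := mx_diff H k hk1 j₀ hj₀H rfl x
      by_cases hA : x j₀ ≤ 1/2
      · rw [if_pos hA] at hdiff
        simp only [hF1, hF2]
        rw [if_pos ⟨hx, hA⟩, if_neg (fun hc => (not_lt.mpr hA) hc.2), sub_zero]
        exact hdiff
      · rw [if_neg hA] at hdiff
        simp only [hF1, hF2]
        rw [if_neg (fun hc => hA hc.2), if_pos ⟨hx, not_le.mp hA⟩]
        simp only [hadef, hddef, hbdef] at hdiff ⊢
        linarith
    · rw [Set.indicator_of_notMem hx, Set.indicator_of_notMem hx]
      simp only [hF1, hF2]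
      rw [if_neg (fun hc => hx hc.1), if_neg (fun hc => hx hc.1)]
  -- j₀ belongs to G
  have hj₀G : j₀ ∈ G := by
    rw [hGdef, Finset.mem_filter]
    refine ⟨hj₀H, ?_⟩
    rw [hj₀def]
    simp only [Fin.val_mk]
    omega
  -- F2 as a sum
  have hF2sum : F2 = fun x => ∑ j ∈ G.erase j₀, hfun j x := by
    funext x
    simp only [hF2, hhfun]
    by_cases hx : x ∈ u
    · by_cases hA : 1/2 < x j₀
      · rw [if_pos ⟨hx, hA⟩]
        have hcount : a x = ∑ j ∈ G.erase j₀, (if x j ≤ 1/2 then (1:ℝ) else 0) := by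
          have h0 := vpx_as_sum H k x
          rw [← hGdef] at h0
          simp only [hadef]
          rw [h0]
          exact (Finset.sum_erase _ (by rw [if_neg (not_le.mpr hA)])).symm
        rw [hcount, Finset.sum_div]
        refine Finset.sum_congr rfl fun j hjm => ?_
        by_cases hc : x j ≤ 1/2
        · rw [if_pos hc, if_pos ⟨hx, hA, hc⟩]
        · rw [if_neg hc, if_neg (fun hcc => hc hcc.2.2), zero_div]
      · rw [if_neg (fun hc => hA hc.2)]
        exact (Finset.sum_eq_zero fun j hjm => if_neg (fun hcc => hA hcc.2.1)).symm
    · rw [if_neg (fun hc => hx hc.1)]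
      exact (Finset.sum_eq_zero fun j hjm => if_neg (fun hcc => hx hcc.1)).symm
  -- sum of swapped functions is Sf
  have hSsum : (fun x => ∑ j ∈ G.erase j₀, hfun' j x) = Sf := by
    funext x
    simp only [hSf, hhfun']
    by_cases hx : x ∈ u
    · by_cases hA : x j₀ ≤ 1/2
      · rw [if_pos ⟨hx, hA⟩]
        have hcount : b x = ∑ j ∈ G.erase j₀, (if 1/2 < x j then (1:ℝ) else 0) := by
          have h0 := vmx_as_sum H k x
          rw [← hGdef] at h0
          simp only [hbdef]
          rw [h0]
          exact (Finset.sum_erase _ (by rw [if_neg (not_lt.mpr hA)])).symm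
        rw [hcount, Finset.sum_div]
        refine Finset.sum_congr rfl fun j hjm => ?_
        by_cases hc : 1/2 < x j
        · rw [if_pos hc, if_pos ⟨hx, hc, hA⟩]
        · rw [if_neg hc, if_neg (fun hcc => hc hcc.2.1), zero_div]
      · rw [if_neg (fun hc => hA hc.2)]
        exact Finset.sum_eq_zero fun j hjm => if_neg (fun hcc => hA hcc.2.2)
    · rw [if_neg (fun hc => hx hc.1)]
      exact Finset.sum_eq_zero fun j hjm => if_neg (fun hcc => hx hcc.1)
  -- swap step
  have hswap_hfun : ∀ j ∈ G.erase j₀, ∫ x, hfun j x ∂ν = ∫ x, hfun' j x ∂ν := by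
    intro j hjm
    obtain ⟨hne, hjG⟩ := Finset.mem_erase.mp hjm
    rw [hGdef] at hjG
    obtain ⟨hjH, hjv⟩ := Finset.mem_filter.mp hjG
    have hj₀v : (j₀ : ℕ) < k := by
      rw [hj₀def]; simp only [Fin.val_mk]; omega
    have hPsi : ∀ x : Fin m → ℝ, Ψ (fun i => x (Equiv.swap j j₀ i)) = Ψ x := by
      intro x
      simp only [hΨdef]
      rw [Prod.mk.injEq]
      constructor
      · funext jj
        exact congrArg x (Equiv.swap_apply_of_ne_of_ne
          (fun h => jj.prop (by rw [h]; exact hjH))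
          (fun h => jj.prop (by rw [h]; exact hj₀H)))
      · funext k'
        have hv1 : vpx H k'.val (fun i => x (Equiv.swap j j₀ i)) = vpx H k'.val x :=
          filter_card_swap H k'.val j j₀ hjH hj₀H (lt_of_lt_of_le hjv k'.prop)
            (lt_of_lt_of_le hj₀v k'.prop) (fun r => r ≤ 1/2) x
        have hv2 : vmx H k'.val (fun i => x (Equiv.swap j j₀ i)) = vmx H k'.val x :=
          filter_card_swap H k'.val j j₀ hjH hj₀H (lt_of_lt_of_le hjv k'.prop)
            (lt_of_lt_of_le hj₀v k'.prop) (fun r => 1/2 < r) x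
        rw [hv1, hv2]
    have hmem' : ∀ x : Fin m → ℝ, ((fun i => x (Equiv.swap j j₀ i)) ∈ u) ↔ (x ∈ u) := by
      intro x
      simp only [hudef, Set.mem_preimage, hPsi x]
    have hbswap : ∀ x : Fin m → ℝ, vmx H k (fun i => x (Equiv.swap j j₀ i)) = vmx H k x :=
      fun x => filter_card_swap H k j j₀ hjH hj₀H hjv hj₀v (fun r => 1/2 < r) x
    have hcomp : ∀ x, hfun j (fun i => x (Equiv.swap j j₀ i)) = hfun' j x := by
      intro x
      have hdswap : d (fun i => x (Equiv.swap j j₀ i)) = d x := by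
        simp only [hddef, hbdef, hbswap x]
      simp only [hhfun, hhfun', Equiv.swap_apply_left, Equiv.swap_apply_right,
        hdswap, hmem' x]
    calc ∫ x, hfun j x ∂ν
        = ∫ x, hfun j (fun i => x (Equiv.swap j j₀ i)) ∂ν :=
          (hint_swap j hjH j₀ hj₀H (hfun j) (hmh j)).symm
      _ = ∫ x, hfun' j x ∂ν := by simp only [hcomp]
  -- pointwise Sf ≤ F1
  have hSF1 : Sf ≤ F1 := by
    intro x
    simp only [hSf, hF1]
    by_cases hxA : x ∈ u ∧ x j₀ ≤ 1/2
    · rw [if_pos hxA, if_pos hxA]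
      rcases Nat.eq_zero_or_pos (vmx H k x) with h | h
      · have hb0' : b x = 0 := by simp only [hbdef, h]; norm_num
        rw [hddef]
        simp only []
        rw [hb0', zero_mul, div_zero]
        positivity
      · have hbne : b x ≠ 0 := by
          simp only [hbdef]
          exact_mod_cast Nat.pos_iff_ne_zero.mp h
        rw [hddef]
        simp only []
        rw [div_mul_cancel_left₀ hbne, one_div]
    · rw [if_neg hxA, if_neg hxA]
  -- the chain
  have hEkey : ∫ x, F2 x ∂ν ≤ ∫ x, F1 x ∂ν := by
    calc ∫ x, F2 x ∂ν
        = ∫ x, ∑ j ∈ G.erase j₀, hfun j x ∂ν := by rw [hF2sum]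
      _ = ∑ j ∈ G.erase j₀, ∫ x, hfun j x ∂ν :=
          integral_finset_sum _ (fun j _ => hinth j)
      _ = ∑ j ∈ G.erase j₀, ∫ x, hfun' j x ∂ν := Finset.sum_congr rfl hswap_hfun
      _ = ∫ x, ∑ j ∈ G.erase j₀, hfun' j x ∂ν :=
          (integral_finset_sum _ (fun j _ => hinth' j)).symm
      _ = ∫ x, Sf x ∂ν := by rw [hSsum]
      _ ≤ ∫ x, F1 x ∂ν := integral_mono hintSf hintF1 hSF1
  rw [← integral_indicator hu, ← integral_indicator hu]
  have hsub : ∫ x, u.indicator (mx H k) x ∂ν - ∫ x, u.indicator (mx H (k-1)) x ∂ν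
      = ∫ x, F1 x ∂ν - ∫ x, F2 x ∂ν := by
    rw [← integral_sub (hintm k) (hintm (k-1)), ← integral_sub hintF1 hintF2]
    exact integral_congr_ae (Filter.Eventually.of_forall fun x => hpt x)
  linarith [hEkey, hsub]

end KnockoffAux

open KnockoffAux

/-- Backward supermartingale property of `M(k) = V⁺(k)/(1 + V⁻(k))` for independent
p-values whose null members are i.i.d. with values in `{1/2, 1}` and
`P(pⱼ = 1/2) ≤ 1/2`; consequently `E[M(k̂)] ≤ E[M(m)]` for every stopping time `k̂`
of the backward filtration. -/
theorem backward_supermartingale_knockoff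
    [MeasurableSpace Ω] (μ : Measure Ω) [IsProbabilityMeasure μ]
    (m : ℕ) (H : Finset (Fin m)) (p : Fin m → Ω → ℝ)
    (hmeas : ∀ j, Measurable (p j))
    (hvals : ∀ j ∈ H, ∀ᵐ ω ∂μ, p j ω = 1/2 ∨ p j ω = 1)
    (hiid : ∀ j ∈ H, ∀ j' ∈ H,
      μ {ω | p j ω = 1/2} = μ {ω | p j' ω = 1/2})
    (hhalf : ∀ j ∈ H, μ {ω | p j ω = 1/2} ≤ 1/2)
    (hindep : ProbabilityTheory.iIndepFun p μ) :
    (∀ k, 1 ≤ k → k ≤ m →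
      μ[Mart H p (k - 1)|Filt H p k] ≤ᵐ[μ] Mart H p k)
    ∧ ∀ τ : Ω → ℕ, (∀ ω, τ ω ≤ m) →
        (∀ k, MeasurableSet[Filt H p k] {ω | k ≤ τ ω}) →
        ∫ ω, Mart H p (τ ω) ω ∂μ ≤ ∫ ω, Mart H p m ω ∂μ := by
  have hX : Measurable (fun ω (j : Fin m) => p j ω) := measurable_pi_lambda _ hmeas
  -- ambient measurability of Mart
  have hMmeas : ∀ k', Measurable (Mart H p k') := by
    intro k'
    exact (measurable_mx H k').comp hX
  have hMint : ∀ k', Integrable (Mart H p k') μ := by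
    intro k'
    refine integrable_of_bound μ _ (hMmeas k') (m : ℝ) fun ω => ?_
    have h1 : Mart H p k' ω = mx H k' (fun j => p j ω) := rfl
    rw [h1, abs_of_nonneg (mx_nonneg H k' _)]
    exact mx_le H k' _
  -- Φ is measurable, so Filt ≤ ambient
  have hΦmeas : ∀ k, Measurable (fun ω =>
      ((fun j : {j : Fin m // j ∉ H} => p j.val ω),
       (fun k' : {k' : ℕ // k ≤ k'} => (Vplus H p k'.val ω, Vminus H p k'.val ω)))) := by
    intro k
    refine Measurable.prod ?_ ?_
    · exact measurable_pi_lambda _ fun j => hmeas j.val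
    · refine measurable_pi_lambda _ fun k' => Measurable.prod ?_ ?_
      · exact (measurable_vpx H k'.val).comp hX
      · exact (measurable_vmx H k'.val).comp hX
  have hm_le : ∀ k, Filt H p k ≤ ‹MeasurableSpace Ω› := by
    intro k s hs
    obtain ⟨t, ht, rfl⟩ := hs
    exact hΦmeas k ht
  -- Mart k is Filt k strongly measurable
  have hMsm : ∀ k, StronglyMeasurable[Filt H p k] (Mart H p k) := by
    intro k
    have hΦm : Measurable[Filt H p k] (fun ω =>
        ((fun j : {j : Fin m // j ∉ H} => p j.val ω),
         (fun k' : {k' : ℕ // k ≤ k'} => (Vplus H p k'.val ω, Vminus H p k'.val ω)))) :=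
      fun t ht => ⟨t, ht, rfl⟩
    have h2 : Measurable (fun q : ({j : Fin m // j ∉ H} → ℝ) × ({k' : ℕ // k ≤ k'} → ℕ × ℕ) =>
        q.2 ⟨k, le_rfl⟩) := (measurable_pi_apply _).comp measurable_snd
    have hg : Measurable (fun q : ({j : Fin m // j ∉ H} → ℝ) × ({k' : ℕ // k ≤ k'} → ℕ × ℕ) =>
        ((q.2 ⟨k, le_rfl⟩).1 : ℝ) / (1 + ((q.2 ⟨k, le_rfl⟩).2 : ℝ))) :=
      (measurable_from_top.comp (measurable_fst.comp h2)).div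
        (measurable_const.add (measurable_from_top.comp (measurable_snd.comp h2)))
    exact (Measurable.stronglyMeasurable (hg.comp hΦm))
  constructor
  · -- backward supermartingale property
    intro k hk1 hkm
    have hm := hm_le k
    haveI : SigmaFinite (μ.trim hm) := by
      have : IsFiniteMeasure (μ.trim hm) := MeasureTheory.isFiniteMeasure_trim hm
      infer_instance
    have hint1 := hMint (k-1)
    have hcsm : StronglyMeasurable[Filt H p k]
        (fun ω => Mart H p k ω - (μ[Mart H p (k-1)|Filt H p k]) ω) :=
      (hMsm k).sub stronglyMeasurable_condExp
    have hcint : Integrable (fun ω => Mart H p k ω - (μ[Mart H p (k-1)|Filt H p k]) ω) μ :=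
      (hMint k).sub integrable_condExp
    have h0 : 0 ≤ᵐ[μ.trim hm]
        fun ω => Mart H p k ω - (μ[Mart H p (k-1)|Filt H p k]) ω := by
      refine ae_nonneg_of_forall_setIntegral_nonneg (hcint.trim hm hcsm) ?_
      intro s hs hμs
      rw [← setIntegral_trim hm hcsm hs]
      rw [integral_sub ((hMint k).integrableOn) (integrable_condExp.integrableOn)]
      rw [setIntegral_condExp hm hint1 hs]
      have := core μ m H p hmeas hvals hiid hindep k hk1 hkm s hs
      linarith
    have h0' : 0 ≤ᵐ[μ]
        fun ω => Mart H p k ω - (μ[Mart H p (k-1)|Filt H p k]) ω :=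
      ae_le_of_ae_le_trim h0
    filter_upwards [h0'] with ω hω
    simp only [Pi.zero_apply] at hω
    linarith
  · -- optional stopping
    intro τ hτm hτmeas
    have hSk : ∀ k, MeasurableSet {ω | k ≤ τ ω} := fun k => hm_le k _ (hτmeas k)
    have hTk : ∀ k, MeasurableSet {ω | τ ω < k} := by
      intro k
      have h := (hSk k).compl
      have he : {ω | k ≤ τ ω}ᶜ = {ω | τ ω < k} := by
        ext ω; simp [not_le]
      rwa [he] at h
    have htel : ∀ ω, Mart H p (τ ω) ω = Mart H p m ω
        - ∑ k ∈ Finset.Icc 1 m, (if τ ω < k then Mart H p k ω - Mart H p (k-1) ω else 0) := by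
      intro ω
      have hgen : ∀ n (f : ℕ → ℝ) (N : ℕ), N ≤ n →
          f N = f n - ∑ k ∈ Finset.Icc 1 n, (if N < k then f k - f (k-1) else 0) := by
        intro n
        induction n with
        | zero => intro f N hN; interval_cases N; simp
        | succ n ih =>
          intro f N hN
          rw [Finset.sum_Icc_succ_top (by omega : 1 ≤ n+1)]
          rcases Nat.lt_or_ge N (n+1) with h | h
          · rw [if_pos h]
            have hN' : N ≤ n := by omega
            have h2 := ih f N hN'
            have h3 : n + 1 - 1 = n := by omega
            rw [h3]
            linarith
          · have hN1 : N = n+1 := by omega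
            subst hN1
            rw [if_neg (lt_irrefl _)]
            have hz : ∑ k ∈ Finset.Icc 1 n, (if n+1 < k then f k - f (k-1) else 0) = 0 := by
              refine Finset.sum_eq_zero fun k hk => ?_
              rw [Finset.mem_Icc] at hk
              rw [if_neg (by omega)]
            rw [hz]
            ring
      exact hgen m (fun k => Mart H p k ω) (τ ω) (hτm ω)
    have hind : ∀ k, (fun ω => if τ ω < k then Mart H p k ω - Mart H p (k-1) ω else 0)
        = {ω | τ ω < k}.indicator (fun ω => Mart H p k ω - Mart H p (k-1) ω) := by
      intro k
      funext ω
      rw [Set.indicator_apply]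
      rfl
    have hint_ite : ∀ k, Integrable
        (fun ω => if τ ω < k then Mart H p k ω - Mart H p (k-1) ω else 0) μ := by
      intro k
      rw [hind k]
      exact ((hMint k).sub (hMint (k-1))).indicator (hTk k)
    have hsum_int : Integrable (fun ω => ∑ k ∈ Finset.Icc 1 m,
        (if τ ω < k then Mart H p k ω - Mart H p (k-1) ω else 0)) μ :=
      integrable_finset_sum _ (fun k _ => hint_ite k)
    have hnn : ∀ k ∈ Finset.Icc 1 m,
        0 ≤ ∫ ω, (if τ ω < k then Mart H p k ω - Mart H p (k-1) ω else 0) ∂μ := by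
      intro k hk
      rw [Finset.mem_Icc] at hk
      rw [hind k, integral_indicator (hTk k),
        integral_sub ((hMint k).integrableOn) ((hMint (k-1)).integrableOn)]
      have hsetF : MeasurableSet[Filt H p k] {ω | τ ω < k} := by
        have h := MeasurableSet.compl (hτmeas k)
        have he : {ω | k ≤ τ ω}ᶜ = {ω | τ ω < k} := by
          ext ω; simp [not_le]
        rwa [he] at h
      have := core μ m H p hmeas hvals hiid hindep k hk.1 hk.2 _ hsetF
      linarith
    calc ∫ ω, Mart H p (τ ω) ω ∂μ
        = ∫ ω, (Mart H p m ω - ∑ k ∈ Finset.Icc 1 m,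
            (if τ ω < k then Mart H p k ω - Mart H p (k-1) ω else 0)) ∂μ := by
          refine integral_congr_ae (Filter.Eventually.of_forall fun ω => ?_)
          exact htel ω
      _ = ∫ ω, Mart H p m ω ∂μ - ∑ k ∈ Finset.Icc 1 m,
            ∫ ω, (if τ ω < k then Mart H p k ω - Mart H p (k-1) ω else 0) ∂μ := by
          rw [integral_sub (hMint m) hsum_int, integral_finset_sum _ (fun k _ => hint_ite k)]
      _ ≤ ∫ ω, Mart H p m ω ∂μ := by
          have := Finset.sum_nonneg hnn
          linarith
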